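/- Every point inside the orthocentroidal disc other than its center-adjacent exceptional point N = (3/2,0) lies on exactly one curve of the family (x² + y²)² = R²((2x − 3)² + 4y²) with R > 1; and N lies on no such curve. -/

import Mathlib

/-- Every point inside the orthocentroidal disc other than `N = (3/2,0)` lies
on exactly one curve `(x² + y²)² = R²((2x − 3)² + 4y²)` with `R > 1`, and
`N` lies on no such curve. -/
theorem stmt7 (x y : ℝ) (h : (x - 2) ^ 2 + y ^ 2 < 1) :
    (¬(x = 3/2 ∧ y = 0) →
      ∃! R : ℝ, 1 < R ∧
        (x ^ 2 + y ^ 2) ^ 2 = R ^ 2 * ((2 * x - 3) ^ 2 + 4 * y ^ 2)) ∧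
    ((x = 3/2 ∧ y = 0) →
      ∀ R : ℝ, 1 < R →
        (x ^ 2 + y ^ 2) ^ 2 ≠ R ^ 2 * ((2 * x - 3) ^ 2 + 4 * y ^ 2)) := by
  have hx1 : 1 < x := by nlinarith [sq_nonneg y]
  have hS : 1 < x ^ 2 + y ^ 2 := by nlinarith [sq_nonneg y]
  have hSD : (2 * x - 3) ^ 2 + 4 * y ^ 2 < (x ^ 2 + y ^ 2) ^ 2 := by
    nlinarith [sq_nonneg y, sq_nonneg (x^2 + y^2 - 1)]
  constructor
  · intro hne
    have hD : 0 < (2 * x - 3) ^ 2 + 4 * y ^ 2 := by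
      rcases lt_or_ge 0 ((2 * x - 3) ^ 2 + 4 * y ^ 2) with h' | h'
      · exact h'
      · exfalso
        apply hne
        constructor <;> nlinarith [sq_nonneg (2*x-3), sq_nonneg y]
    set D := (2 * x - 3) ^ 2 + 4 * y ^ 2 with hDdef
    have hsq : Real.sqrt D ^ 2 = D := Real.sq_sqrt hD.le
    have hsqpos : 0 < Real.sqrt D := Real.sqrt_pos.mpr hD
    refine ⟨(x ^ 2 + y ^ 2) / Real.sqrt D, ⟨?_, ?_⟩, ?_⟩
    · rw [lt_div_iff₀ hsqpos, one_mul]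
      nlinarith
    · field_simp
      exact hsq
    · rintro R ⟨hR1, hReq⟩
      have hR0 : 0 < R := lt_trans one_pos hR1
      have h2 : R ^ 2 = ((x ^ 2 + y ^ 2) / Real.sqrt D) ^ 2 := by
        field_simp
        nlinarith
      have hpos2 : 0 < (x ^ 2 + y ^ 2) / Real.sqrt D := by positivity
      nlinarith [h2, hR0, hpos2]
  · rintro ⟨hx, hy⟩ R hR
    subst hx; subst hy
    norm_num
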